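/- arXiv:2204.02668 — 4 statements merged into one kernel-verified Lean document; each statement's English description precedes it below -/
import Mathlib

section
/- Let G = (V, E) be a finite graph and let τ ≥ k ≥ 1. Consider the temporal graph G with τ identical layers all equal to E. Then G admits a k-activity timeline consisting only of length-0 intervals covering it if and only if G admits a (τ : τ−k)-coloring, i.e., a function c : V → {S ⊆ [τ] : |S| = τ−k} with c(u) ∩ c(v) = ∅ for every edge {u,v} ∈ E. -/
def covers {V : Type*} {τ : ℕ} (E : Fin τ → SimpleGraph V)
    (T : Finset (V × Fin τ × Fin τ)) : Prop :=
  ∀ (t : Fin τ) (u v : V), (E t).Adj u v →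
    ∃ x ∈ T, (x.1 = u ∨ x.1 = v) ∧ x.2.1 ≤ t ∧ t ≤ x.2.2

def isTimeline {V : Type*} [DecidableEq V] {τ : ℕ} (k : ℕ)
    (T : Finset (V × Fin τ × Fin τ)) : Prop :=
  (∀ x ∈ T, x.2.1 ≤ x.2.2) ∧
  ∀ v : V, (T.filter (fun x => x.1 = v)).card ≤ k

theorem stmt1 {V : Type*} [Fintype V] [DecidableEq V] (G : SimpleGraph V)
    (τ k : ℕ) (hk : 1 ≤ k) (hτ : k ≤ τ) :
    (∃ T : Finset (V × Fin τ × Fin τ), isTimeline k T ∧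
      (∀ x ∈ T, x.2.1 = x.2.2) ∧ covers (fun _ => G) T) ↔
    (∃ c : V → Finset (Fin τ), (∀ v, (c v).card = τ - k) ∧
      ∀ u v, G.Adj u v → Disjoint (c u) (c v)) := by
  constructor
  · rintro ⟨T, ⟨hle, hcard⟩, hlen, hcov⟩
    set A : V → Finset (Fin τ) :=
      fun v => Finset.univ.filter (fun t : Fin τ => (v, t, t) ∈ T) with hA
    have key : ∀ v : V, τ - k ≤ (A v)ᶜ.card := by
      intro v
      have h1 : (A v).card ≤ k := by
        calc (A v).card ≤ (T.filter (fun x => x.1 = v)).card := by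
              apply Finset.card_le_card_of_injOn (fun t => (v, t, t))
              · intro t ht
                simp only [hA, Finset.mem_coe, Finset.mem_filter, Finset.mem_univ, true_and] at ht
                exact Finset.mem_coe.mpr (Finset.mem_filter.mpr ⟨ht, rfl⟩)
              · intro a _ b _ h
                simpa using congrArg (fun x : V × Fin τ × Fin τ => x.2.1) h
          _ ≤ k := hcard v
      rw [Finset.card_compl, Fintype.card_fin]
      exact Nat.sub_le_sub_left h1 τ
    choose c hc1 hc2 using fun v => Finset.exists_subset_card_eq (key v)
    refine ⟨c, hc2, ?_⟩
    intro u v huv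
    have hdisj : Disjoint ((A u)ᶜ) ((A v)ᶜ) := by
      rw [Finset.disjoint_left]
      intro t htu htv
      simp only [hA, Finset.mem_compl, Finset.mem_filter, Finset.mem_univ, true_and] at htu htv
      obtain ⟨x, hxT, hx1, hx2, hx3⟩ := hcov t u v huv
      obtain ⟨w, a, b⟩ := x
      have hab : a = b := hlen _ hxT
      simp only at hx1 hx2 hx3
      have hat : a = t := le_antisymm hx2 (hab ▸ hx3)
      subst hat; subst hab
      rcases hx1 with h | h <;> subst h
      · exact htu hxT
      · exact htv hxT
    exact hdisj.mono (hc1 u) (hc1 v)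
  · rintro ⟨c, hcard, hdisj⟩
    refine ⟨Finset.univ.filter
      (fun x : V × Fin τ × Fin τ => x.2.1 = x.2.2 ∧ x.2.1 ∉ c x.1), ⟨?_, ?_⟩, ?_, ?_⟩
    · intro x hx
      simp only [Finset.mem_filter] at hx
      exact le_of_eq hx.2.1
    · intro v
      have h1 : ((Finset.univ.filter
          (fun x : V × Fin τ × Fin τ => x.2.1 = x.2.2 ∧ x.2.1 ∉ c x.1)).filter
          (fun x => x.1 = v)).card ≤ ((c v)ᶜ).card := by
        apply Finset.card_le_card_of_injOn (fun x => x.2.1)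
        · intro x hx
          simp only [Finset.mem_coe, Finset.mem_filter, Finset.mem_univ, true_and] at hx
          simp only [Finset.mem_coe, Finset.mem_compl]
          rw [← hx.2]
          exact hx.1.2
        · intro x hx y hy h
          simp only [Finset.mem_coe, Finset.mem_filter, Finset.mem_univ, true_and] at hx hy
          obtain ⟨w, a, b⟩ := x; obtain ⟨w', a', b'⟩ := y
          simp_all
      rw [Finset.card_compl, Fintype.card_fin, hcard v, Nat.sub_sub_self hτ] at h1
      exact h1
    · intro x hx
      simp only [Finset.mem_filter] at hx
      exact hx.2.1
    · intro t u v huv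
      by_cases h : t ∈ c u
      · have hv : t ∉ c v := Finset.disjoint_left.mp (hdisj u v huv) h
        exact ⟨(v, t, t), by simp [hv], Or.inr rfl, le_refl t, le_refl t⟩
      · exact ⟨(u, t, t), by simp [h], Or.inl rfl, le_refl t, le_refl t⟩
end

section
/- Let G = (V, E) be a finite graph and s ∈ ℕ. Consider the temporal graph G with two layers E_1 = E_2 = E. Then G has an odd cycle transversal X ⊆ V with |X| ≤ s (i.e., G − X is bipartite) if and only if G admits a 1-activity timeline T covering it with Σ_{(v,a,b)∈T} (b − a) ≤ s. -/
theorem stmt2 {V : Type*} [Fintype V] [DecidableEq V] (G : SimpleGraph V) (s : ℕ) :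
    (∃ X : Finset V, X.card ≤ s ∧
      ∃ f : V → Bool, ∀ u v, G.Adj u v → u ∉ X → v ∉ X → f u ≠ f v) ↔
    (∃ T : Finset (V × Fin 2 × Fin 2), isTimeline 1 T ∧
      covers (fun _ : Fin 2 => G) T ∧
      ∑ x ∈ T, (x.2.2.val - x.2.1.val) ≤ s) := by
  constructor
  · rintro ⟨X, hX, f, hf⟩
    set g : V → Fin 2 × Fin 2 := fun v =>
      if v ∈ X then ((0 : Fin 2), (1 : Fin 2))
      else if f v then ((0 : Fin 2), (0 : Fin 2)) else ((1 : Fin 2), (1 : Fin 2)) with hg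
    refine ⟨Finset.univ.image (fun v => (v, g v)), ⟨?_, ?_⟩, ?_, ?_⟩
    · intro x hx
      simp only [Finset.mem_image] at hx
      obtain ⟨v, _, rfl⟩ := hx
      simp only [hg]
      split_ifs <;> simp [Fin.le_def]
    · intro v
      have hsub : (Finset.univ.image (fun v => (v, g v))).filter (fun x => x.1 = v)
          ⊆ {(v, g v)} := by
        intro x hx
        simp only [Finset.mem_filter, Finset.mem_image, Finset.mem_univ, true_and] at hx
        obtain ⟨⟨w, rfl⟩, h⟩ := hx
        simp only at h
        subst h
        simp
      calc _ ≤ ({(v, g v)} : Finset _).card := Finset.card_le_card hsub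
        _ = 1 := rfl
    · intro t u v huv
      have ht := t.isLt
      by_cases hu : u ∈ X
      · refine ⟨(u, g u), Finset.mem_image_of_mem _ (Finset.mem_univ u), Or.inl rfl, ?_, ?_⟩ <;>
          · simp only [hg, hu, if_true, Fin.le_def]
            omega
      · by_cases hv : v ∈ X
        · refine ⟨(v, g v), Finset.mem_image_of_mem _ (Finset.mem_univ v), Or.inr rfl, ?_, ?_⟩ <;>
            · simp only [hg, hv, if_true, Fin.le_def]
              omega
        · have hne := hf u v huv hu hv
          fin_cases t
          · -- t = 0 : use the vertex whose f is true
            rcases hfu : f u with _ | _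
            · have hfv : f v = true := by
                cases hfv : f v
                · exact absurd (hfu.trans hfv.symm) hne
                · rfl
              exact ⟨(v, g v), Finset.mem_image_of_mem _ (Finset.mem_univ v), Or.inr rfl,
                by simp [hg, hv, hfv]⟩
            · exact ⟨(u, g u), Finset.mem_image_of_mem _ (Finset.mem_univ u), Or.inl rfl,
                by simp [hg, hu, hfu]⟩
          · -- t = 1 : use the vertex whose f is false
            rcases hfu : f u with _ | _
            · exact ⟨(u, g u), Finset.mem_image_of_mem _ (Finset.mem_univ u), Or.inl rfl,
                by simp [hg, hu, hfu]⟩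
            · have hfv : f v = false := by
                cases hfv : f v
                · rfl
                · exact absurd (hfu.trans hfv.symm) hne
              exact ⟨(v, g v), Finset.mem_image_of_mem _ (Finset.mem_univ v), Or.inr rfl,
                by simp [hg, hv, hfv]⟩
    · rw [Finset.sum_image (fun a _ b _ h => congrArg Prod.fst h)]
      have : ∀ v : V, ((g v).2.val - (g v).1.val) = if v ∈ X then 1 else 0 := by
        intro v
        simp only [hg]
        split_ifs <;> rfl
      calc ∑ v : V, ((v, g v).2.2.val - (v, g v).2.1.val)
          = ∑ v : V, (if v ∈ X then 1 else 0) := by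
            exact Finset.sum_congr rfl (fun v _ => this v)
        _ = X.card := by
            rw [Finset.sum_ite_mem, Finset.univ_inter, Finset.card_eq_sum_ones]
        _ ≤ s := hX
  · rintro ⟨T, ⟨hab, hcard⟩, hcov, hsum⟩
    set X : Finset V := (T.filter (fun x => x.2.1 ≠ x.2.2)).image Prod.fst with hXdef
    have hnotX : ∀ v : V, v ∉ X → ∀ x ∈ T, x.1 = v → x.2.1 = x.2.2 := by
      intro v hv x hx hxv
      by_contra hne
      apply hv
      rw [hXdef]
      exact hxv ▸ Finset.mem_image_of_mem _ (Finset.mem_filter.2 ⟨hx, hne⟩)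
    refine ⟨X, ?_, fun v => decide ((v, (0 : Fin 2), (0 : Fin 2)) ∈ T), ?_⟩
    · calc X.card ≤ (T.filter (fun x => x.2.1 ≠ x.2.2)).card := Finset.card_image_le
        _ = ∑ x ∈ T.filter (fun x => x.2.1 ≠ x.2.2), 1 := by rw [Finset.card_eq_sum_ones]
        _ ≤ ∑ x ∈ T.filter (fun x => x.2.1 ≠ x.2.2), (x.2.2.val - x.2.1.val) := by
            apply Finset.sum_le_sum
            intro x hx
            obtain ⟨hxT, hne⟩ := Finset.mem_filter.1 hx
            have h1 := hab x hxT
            have h2 : x.2.1.val ≠ x.2.2.val := fun h => hne (Fin.ext h)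
            have := Fin.le_def.1 h1
            omega
        _ ≤ ∑ x ∈ T, (x.2.2.val - x.2.1.val) :=
            Finset.sum_le_sum_of_subset (Finset.filter_subset _ _)
        _ ≤ s := hsum
    · intro u v huv hu hv
      simp only [ne_eq, decide_eq_decide]
      intro heq
      by_cases h0 : (u, (0 : Fin 2), (0 : Fin 2)) ∈ T
      · -- both have (·,0,0); derive contradiction from covering at t = 1
        have h0v : (v, (0 : Fin 2), (0 : Fin 2)) ∈ T := heq.mp h0
        obtain ⟨x, hxT, hx1, hxa, hxb⟩ := hcov 1 u v huv
        have hb : x.2.2 = 1 := by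
          have := Fin.le_def.1 hxb
          have := x.2.2.isLt
          exact Fin.ext (by omega)
        have ha : x.2.1 = 1 := by
          rcases hx1 with rfl' | rfl'
          · exact (hnotX u hu x hxT rfl').trans hb
          · exact (hnotX v hv x hxT rfl').trans hb
        have hx11 : x = (x.1, (1 : Fin 2), (1 : Fin 2)) := by
          simp [Prod.ext_iff, ha, hb]
        rcases hx1 with rfl' | rfl'
        · have h2 : (1 : ℕ) < (T.filter (fun y => y.1 = x.1)).card := by
            apply Finset.one_lt_card.2
            refine ⟨(x.1, (0 : Fin 2), (0 : Fin 2)), Finset.mem_filter.2 ⟨by rw [rfl']; exact h0, rfl⟩,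
              x, Finset.mem_filter.2 ⟨hxT, rfl⟩, ?_⟩
            rw [hx11]
            simp
          exact absurd (hcard x.1) (by omega)
        · have h2 : (1 : ℕ) < (T.filter (fun y => y.1 = x.1)).card := by
            apply Finset.one_lt_card.2
            refine ⟨(x.1, (0 : Fin 2), (0 : Fin 2)), Finset.mem_filter.2 ⟨by rw [rfl']; exact h0v, rfl⟩,
              x, Finset.mem_filter.2 ⟨hxT, rfl⟩, ?_⟩
            rw [hx11]
            simp
          exact absurd (hcard x.1) (by omega)
      · -- neither has (·,0,0); contradiction from covering at t = 0
        have h0v : (v, (0 : Fin 2), (0 : Fin 2)) ∉ T := fun h => h0 (heq.mpr h)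
        obtain ⟨x, hxT, hx1, hxa, hxb⟩ := hcov 0 u v huv
        have ha : x.2.1 = 0 := Fin.le_zero_iff.1 hxa
        have hb : x.2.2 = 0 := by
          rcases hx1 with rfl' | rfl'
          · exact ((hnotX u hu x hxT rfl').symm).trans ha
          · exact ((hnotX v hv x hxT rfl').symm).trans ha
        have hx00 : x = (x.1, (0 : Fin 2), (0 : Fin 2)) := by simp [Prod.ext_iff, ha, hb]
        rcases hx1 with rfl' | rfl'
        · exact h0 (by rw [← rfl', ← hx00]; exact hxT)
        · exact h0v (by rw [← rfl', ← hx00]; exact hxT)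
end

section
/- Let G = (V, E_1, E_2) be a temporal graph with two layers and ℓ ∈ ℕ. Construct a 2-CNF formula φ over variables {x^v_1, x^v_2 : v ∈ V} containing, for each i ∈ {1,2} and each edge {u,v} ∈ E_i, ℓ+1 copies of the clause (x^u_i ∨ x^v_i), and for each v ∈ V the clause (¬x^v_1 ∨ ¬x^v_2). Then G admits a 1-activity timeline T covering it with Σ_{(v,a,b)∈T}(b−a) ≤ ℓ if and only if φ can be made satisfiable by deleting at most ℓ clauses. -/
def phi {V : Type*} [Fintype V] [DecidableEq V] (E : Fin 2 → SimpleGraph V)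
    [∀ i, DecidableRel (E i).Adj] (ℓ : ℕ) :
    Multiset (Sym2 ((V × Fin 2) × Bool)) :=
  (ℓ + 1) • ((Finset.univ : Finset (Fin 2)).val.bind fun i =>
      (E i).edgeFinset.val.map (Sym2.map (fun v => ((v, i), true)))) +
  (Finset.univ : Finset V).val.map
    (fun v => s(((v, (0 : Fin 2)), false), ((v, (1 : Fin 2)), false)))

namespace Stmt3Aux

variable {V : Type*} [Fintype V] [DecidableEq V]

/-- The vertex clause for `v`. -/
def cV (v : V) : Sym2 ((V × Fin 2) × Bool) :=
  s(((v, (0 : Fin 2)), false), ((v, (1 : Fin 2)), false))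

lemma cV_inj : Function.Injective (cV (V := V)) := by
  intro a b h
  rw [cV, cV, Sym2.eq_iff] at h
  rcases h with ⟨h1, _⟩ | ⟨h1, _⟩ <;>
    exact congrArg (fun p => p.1.1) h1

/-- The edge-clause part of the formula (one copy each). -/
def edgePart (E : Fin 2 → SimpleGraph V) [∀ i, DecidableRel (E i).Adj] :
    Multiset (Sym2 ((V × Fin 2) × Bool)) :=
  (Finset.univ : Finset (Fin 2)).val.bind fun i =>
      (E i).edgeFinset.val.map (Sym2.map (fun v => ((v, i), true)))

lemma phi_eq (E : Fin 2 → SimpleGraph V) [∀ i, DecidableRel (E i).Adj] (ℓ : ℕ) :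
    phi E ℓ = (ℓ + 1) • edgePart E +
      (Finset.univ : Finset V).val.map cV := rfl

lemma mem_edgePart_true (E : Fin 2 → SimpleGraph V) [∀ i, DecidableRel (E i).Adj]
    {C : Sym2 ((V × Fin 2) × Bool)} (hC : C ∈ edgePart E) :
    ∀ l ∈ C, l.2 = true := by
  rw [edgePart, Multiset.mem_bind] at hC
  obtain ⟨i, -, hC⟩ := hC
  rw [Multiset.mem_map] at hC
  obtain ⟨e, -, rfl⟩ := hC
  intro l hl
  rw [Sym2.mem_map] at hl
  obtain ⟨a, -, rfl⟩ := hl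
  rfl

lemma cV_notMem_edgePart (E : Fin 2 → SimpleGraph V) [∀ i, DecidableRel (E i).Adj]
    (v : V) : cV v ∉ edgePart E := by
  intro h
  have := mem_edgePart_true E h ((v, (0 : Fin 2)), false) (by rw [cV]; exact Sym2.mem_mk_left _ _)
  simp at this

lemma count_cV (E : Fin 2 → SimpleGraph V) [∀ i, DecidableRel (E i).Adj] (ℓ : ℕ)
    (v : V) : Multiset.count (cV v) (phi E ℓ) = 1 := by
  rw [phi_eq, Multiset.count_add, Multiset.count_nsmul,
    Multiset.count_eq_zero_of_notMem (cV_notMem_edgePart E v),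
    Multiset.count_map_eq_count' cV _ cV_inj v,
    Multiset.count_eq_one_of_mem Finset.univ.nodup (Finset.mem_univ v)]
  ring

lemma edgeClause_mem (E : Fin 2 → SimpleGraph V) [∀ i, DecidableRel (E i).Adj]
    {i : Fin 2} {u v : V} (h : (E i).Adj u v) :
    s(((u, i), true), ((v, i), true)) ∈ edgePart E := by
  rw [edgePart, Multiset.mem_bind]
  refine ⟨i, Finset.mem_univ_val i, ?_⟩
  rw [Multiset.mem_map]
  exact ⟨s(u, v), by simpa using h, by simp⟩

lemma count_edgeClause (E : Fin 2 → SimpleGraph V) [∀ i, DecidableRel (E i).Adj]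
    (ℓ : ℕ) {i : Fin 2} {u v : V} (h : (E i).Adj u v) :
    ℓ + 1 ≤ Multiset.count s(((u, i), true), ((v, i), true)) (phi E ℓ) := by
  rw [phi_eq, Multiset.count_add, Multiset.count_nsmul]
  have h1 : 1 ≤ Multiset.count s(((u, i), true), ((v, i), true)) (edgePart E) :=
    Multiset.one_le_count_iff_mem.mpr (edgeClause_mem E h)
  nlinarith

lemma edge_sat (E : Fin 2 → SimpleGraph V) [∀ i, DecidableRel (E i).Adj] (ℓ : ℕ)
    (D : Multiset (Sym2 ((V × Fin 2) × Bool))) (hcard : Multiset.card D ≤ ℓ)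
    (α : V × Fin 2 → Bool) (hα : ∀ C ∈ phi E ℓ - D, ∃ l ∈ C, α l.1 = l.2)
    (i : Fin 2) (u v : V) (h : (E i).Adj u v) :
    α (u, i) = true ∨ α (v, i) = true := by
  have hmem : s(((u, i), true), ((v, i), true)) ∈ phi E ℓ - D := by
    rw [← Multiset.count_pos, Multiset.count_sub]
    have h1 := count_edgeClause E ℓ h
    have h2 : Multiset.count s(((u, i), true), ((v, i), true)) D ≤ ℓ :=
      le_trans (Multiset.count_le_card _ _) hcard
    omega
  obtain ⟨l, hl, hsat⟩ := hα _ hmem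
  rw [Sym2.mem_iff] at hl
  rcases hl with rfl | rfl
  · exact Or.inl hsat
  · exact Or.inr hsat

lemma exists_adj {G : SimpleGraph V} [DecidableRel G.Adj] {e : Sym2 V}
    (he : e ∈ G.edgeFinset) : ∃ u v, G.Adj u v ∧ e = s(u, v) := by
  induction e using Sym2.ind with
  | _ u v => exact ⟨u, v, by simpa using he, rfl⟩

lemma fin2_le_one (a : Fin 2) : a ≤ 1 := by
  rw [Fin.le_def]
  have := a.isLt
  simp only [Fin.val_one]
  omega

end Stmt3Aux

open Stmt3Aux in
theorem stmt3 {V : Type*} [Fintype V] [DecidableEq V]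
    (E : Fin 2 → SimpleGraph V) [∀ i, DecidableRel (E i).Adj] (ℓ : ℕ) :
    (∃ T : Finset (V × Fin 2 × Fin 2), isTimeline 1 T ∧ covers E T ∧
      ∑ x ∈ T, (x.2.2.val - x.2.1.val) ≤ ℓ) ↔
    (∃ D : Multiset (Sym2 ((V × Fin 2) × Bool)), D ≤ phi E ℓ ∧
      Multiset.card D ≤ ℓ ∧
      ∃ α : V × Fin 2 → Bool, ∀ C ∈ phi E ℓ - D, ∃ l ∈ C, α l.1 = l.2) := by
  classical
  constructor
  · rintro ⟨T, ⟨hTle, hTcard⟩, hcov, hcost⟩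
    set S : Finset (V × Fin 2 × Fin 2) :=
      T.filter (fun x => x.2.1 = 0 ∧ x.2.2 = 1) with hSdef
    set D : Multiset (Sym2 ((V × Fin 2) × Bool)) :=
      (S.image Prod.fst).val.map cV with hDdef
    have hDle : D ≤ phi E ℓ := by
      rw [phi_eq]
      refine le_trans ?_ (Multiset.le_add_left _ _)
      exact Multiset.map_le_map (Finset.val_le_iff.mpr (Finset.subset_univ _))
    refine ⟨D, hDle, ?_, ?_⟩
    · -- card bound
      have h1 : Multiset.card D = (S.image Prod.fst).card := by
        rw [hDdef, Multiset.card_map]; rfl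
      have h2 : (S.image Prod.fst).card ≤ S.card := Finset.card_image_le
      have h3 : S.card ≤ ∑ x ∈ T, (x.2.2.val - x.2.1.val) := by
        rw [Finset.card_eq_sum_ones]
        refine le_trans (Finset.sum_le_sum ?_)
          (Finset.sum_le_sum_of_subset (Finset.filter_subset _ _))
        intro x hx
        rw [hSdef, Finset.mem_filter] at hx
        rw [hx.2.1, hx.2.2]
        simp
      omega
    · -- satisfying assignment
      set α : V × Fin 2 → Bool :=
        fun p => decide (∃ x ∈ T, x.1 = p.1 ∧ x.2.1 ≤ p.2 ∧ p.2 ≤ x.2.2) with hαdef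
      refine ⟨α, ?_⟩
      intro C hC
      have hCphi : C ∈ phi E ℓ := Multiset.mem_of_le (tsub_le_self) hC
      rw [phi_eq, Multiset.mem_add] at hCphi
      rcases hCphi with hCe | hCv
      · -- edge clause
        rw [Multiset.mem_nsmul] at hCe
        replace hCe := hCe.2
        rw [edgePart, Multiset.mem_bind] at hCe
        obtain ⟨i, -, hCe⟩ := hCe
        rw [Multiset.mem_map] at hCe
        obtain ⟨e, he, rfl⟩ := hCe
        obtain ⟨u, v, hadj, rfl⟩ := exists_adj (Finset.mem_def.mpr he)
        obtain ⟨x, hxT, hor, hx1, hx2⟩ := hcov i u v hadj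
        rcases hor with hxu | hxv
        · refine ⟨((u, i), true), by simp, ?_⟩
          simp only [hαdef, decide_eq_true_eq]
          exact ⟨x, hxT, hxu, hx1, hx2⟩
        · refine ⟨((v, i), true), by simp, ?_⟩
          simp only [hαdef, decide_eq_true_eq]
          exact ⟨x, hxT, hxv, hx1, hx2⟩
      · -- vertex clause
        rw [Multiset.mem_map] at hCv
        obtain ⟨w, -, rfl⟩ := hCv
        by_contra hno
        push_neg at hno
        have h0 : α (w, (0 : Fin 2)) = true := by
          have := hno ((w, (0 : Fin 2)), false) (Sym2.mem_mk_left _ _)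
          revert this
          cases h : α (w, (0 : Fin 2)) <;> simp
        have h1 : α (w, (1 : Fin 2)) = true := by
          have := hno ((w, (1 : Fin 2)), false) (Sym2.mem_mk_right _ _)
          revert this
          cases h : α (w, (1 : Fin 2)) <;> simp
        rw [hαdef, decide_eq_true_eq] at h0 h1
        obtain ⟨x, hxT, hx1, hxa, -⟩ := h0
        obtain ⟨y, hyT, hy1, -, hyb⟩ := h1
        have hxy : x = y := by
          have := hTcard w
          rw [Finset.card_le_one] at this
          exact this x (Finset.mem_filter.mpr ⟨hxT, hx1⟩)
            y (Finset.mem_filter.mpr ⟨hyT, hy1⟩)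
        subst hxy
        have hxS : x ∈ S := by
          rw [hSdef, Finset.mem_filter]
          refine ⟨hxT, Fin.le_zero_iff.mp hxa, le_antisymm (fin2_le_one _) hyb⟩
        have hwD : cV w ∈ D := by
          rw [hDdef, Multiset.mem_map]
          exact ⟨w, by
            rw [Finset.mem_def.symm]
            exact Finset.mem_image.mpr ⟨x, hxS, hx1⟩, rfl⟩
        have hcnt : Multiset.count (cV w) (phi E ℓ - D) = 0 := by
          rw [Multiset.count_sub, count_cV]
          have : 1 ≤ Multiset.count (cV w) D := Multiset.one_le_count_iff_mem.mpr hwD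
          omega
        have : cV w ∈ phi E ℓ - D := hC
        rw [← Multiset.count_pos, hcnt] at this
        exact absurd this (by omega)
  · rintro ⟨D, hDle, hDcard, α, hα⟩
    set f : V → V × Fin 2 × Fin 2 := fun v =>
      (v, (if α (v, (0 : Fin 2)) then (0 : Fin 2) else 1),
          (if α (v, (1 : Fin 2)) then (1 : Fin 2) else 0)) with hfdef
    set P : V → Prop := fun v => α (v, (0 : Fin 2)) = true ∨ α (v, (1 : Fin 2)) = true
      with hPdef
    set T : Finset (V × Fin 2 × Fin 2) := (Finset.univ.filter P).image f with hTdef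
    have hfe : ∀ v, (f v).1 = v := fun v => rfl
    refine ⟨T, ⟨?_, ?_⟩, ?_, ?_⟩
    · -- intervals well-formed
      intro x hx
      rw [hTdef, Finset.mem_image] at hx
      obtain ⟨v, hv, rfl⟩ := hx
      rw [Finset.mem_filter] at hv
      rcases hv.2 with h | h <;>
        cases h0 : α (v, (0 : Fin 2)) <;> cases h1 : α (v, (1 : Fin 2)) <;>
        simp_all [hfdef] <;> decide
    · -- at most one per vertex
      intro v
      refine le_trans (Finset.card_le_card (fun x hx => ?_)) (by simp : ({f v} : Finset _).card ≤ 1)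
      rw [Finset.mem_filter] at hx
      obtain ⟨hxT, hxv⟩ := hx
      rw [hTdef, Finset.mem_image] at hxT
      obtain ⟨w, -, rfl⟩ := hxT
      have : w = v := hxv
      subst this
      exact Finset.mem_singleton_self _
    · -- covers
      intro t u v hadj
      rcases edge_sat E ℓ D hDcard α hα t u v hadj with h | h
      · refine ⟨f u, ?_, Or.inl rfl, ?_, ?_⟩
        · rw [hTdef]
          exact Finset.mem_image_of_mem f (Finset.mem_filter.mpr ⟨Finset.mem_univ u,
            by fin_cases t <;> [exact Or.inl h; exact Or.inr h]⟩)
        · fin_cases t <;> simp_all [hfdef] <;> exact fin2_le_one _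
        · fin_cases t <;> simp_all [hfdef] <;> exact Fin.zero_le _
      · refine ⟨f v, ?_, Or.inr rfl, ?_, ?_⟩
        · rw [hTdef]
          exact Finset.mem_image_of_mem f (Finset.mem_filter.mpr ⟨Finset.mem_univ v,
            by fin_cases t <;> [exact Or.inl h; exact Or.inr h]⟩)
        · fin_cases t <;> simp_all [hfdef] <;> exact fin2_le_one _
        · fin_cases t <;> simp_all [hfdef] <;> exact Fin.zero_le _
    · -- cost bound
      set Q : V → Prop := fun v => α (v, (0 : Fin 2)) = true ∧ α (v, (1 : Fin 2)) = true
        with hQdef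
      have hcost_eq : ∀ v : V, ((f v).2.2.val - (f v).2.1.val) = if Q v then 1 else 0 := by
        intro v
        rcases Bool.eq_false_or_eq_true (α (v, (0 : Fin 2))) with h0 | h0 <;>
          rcases Bool.eq_false_or_eq_true (α (v, (1 : Fin 2))) with h1 | h1 <;>
          simp [hfdef, hQdef, h0, h1]
      have hsum : ∑ x ∈ T, (x.2.2.val - x.2.1.val)
          = ∑ v ∈ Finset.univ.filter P, ((f v).2.2.val - (f v).2.1.val) := by
        rw [hTdef]
        exact Finset.sum_image (fun a _ b _ hab => congrArg Prod.fst hab)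
      have hQcard : ∀ v : V, Q v → cV v ∈ D := by
        intro v hQv
        by_contra hvD
        have hvphi : cV v ∈ phi E ℓ - D := by
          rw [← Multiset.count_pos, Multiset.count_sub, count_cV,
            Multiset.count_eq_zero_of_notMem hvD]
          omega
        obtain ⟨l, hl, hsat⟩ := hα _ hvphi
        rw [cV, Sym2.mem_iff] at hl
        rcases hl with rfl | rfl
        · rw [hQv.1] at hsat; simp at hsat
        · rw [hQv.2] at hsat; simp at hsat
      calc ∑ x ∈ T, (x.2.2.val - x.2.1.val)
          = ∑ v ∈ Finset.univ.filter P, ((f v).2.2.val - (f v).2.1.val) := hsum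
        _ ≤ ∑ v : V, ((f v).2.2.val - (f v).2.1.val) :=
            Finset.sum_le_sum_of_subset (Finset.filter_subset _ _)
        _ = ∑ v : V, if Q v then 1 else 0 := Finset.sum_congr rfl (fun v _ => hcost_eq v)
        _ = (Finset.univ.filter Q).card := (Finset.card_filter Q Finset.univ).symm
        _ = ((Finset.univ.filter Q).image cV).card :=
            (Finset.card_image_of_injective _ cV_inj).symm
        _ ≤ D.toFinset.card := Finset.card_le_card (by
            intro C hC
            rw [Finset.mem_image] at hC
            obtain ⟨v, hv, rfl⟩ := hC
            rw [Finset.mem_filter] at hv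
            exact Multiset.mem_toFinset.mpr (hQcard v hv.2))
        _ ≤ Multiset.card D := Multiset.toFinset_card_le D
        _ ≤ ℓ := hDcard
end

section
/- Let G = (V, (E_t)_{t∈[τ]}) be a temporal graph and (k_v)_{v∈V} natural numbers. For each E ⊆ {S ⊆ V : |S|=2}, let a(E) = |{t ∈ [τ] : E_t = E}| and let C(E) be the set of vertex covers of (V,E). Then there exists an activity timeline T consisting only of length-0 intervals, covering G, with at most k_v intervals per vertex v, if and only if there exist nonnegative integers X_E^S (for E ⊆ {S ⊆ V : |S|=2} and S ∈ C(E)) satisfying: (1) Σ_{S∈C(E)} X_E^S = a(E) for every E, and (2) Σ_E Σ_{S∈C(E), v∈S} X_E^S ≤ k_v for every v ∈ V. -/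
/-- card distributes over finset sums of multisets -/
lemma card_finsetSum {β γ : Type*} (s : Finset β) (f : β → Multiset γ) :
    Multiset.card (∑ x ∈ s, f x) = ∑ x ∈ s, Multiset.card (f x) := by
  classical
  induction s using Finset.induction_on with
  | empty => simp
  | @insert a s h ih => simp [Finset.sum_insert h, ih]

lemma filter_finsetSum {β γ : Type*} (p : γ → Prop) [DecidablePred p]
    (s : Finset β) (f : β → Multiset γ) :
    Multiset.filter p (∑ x ∈ s, f x) = ∑ x ∈ s, Multiset.filter p (f x) := by
  classical
  induction s using Finset.induction_on with
  | empty => simp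
  | @insert a s h ih => simp [Finset.sum_insert h, Multiset.filter_add, ih]

lemma filter_replicate' {γ : Type*} (p : γ → Prop) [DecidablePred p] (n : ℕ) (a : γ) :
    Multiset.filter p (Multiset.replicate n a) =
      if p a then Multiset.replicate n a else 0 := by
  split_ifs with h
  · exact Multiset.filter_eq_self.2 fun b hb => (Multiset.eq_of_mem_replicate hb) ▸ h
  · exact Multiset.filter_eq_nil.2 fun b hb => (Multiset.eq_of_mem_replicate hb) ▸ h

/-- Any multiset of the same cardinality as a nodup multiset is its image under some map. -/
lemma exists_map_eq {ι α : Type*} [DecidableEq ι] [Nonempty α] (s : Multiset ι) :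
    s.Nodup → ∀ M : Multiset α, Multiset.card s = Multiset.card M →
      ∃ f : ι → α, s.map f = M := by
  induction s using Multiset.induction_on with
  | empty =>
    intro _ M hM
    refine ⟨fun _ => Classical.arbitrary α, ?_⟩
    simp only [Multiset.map_zero]
    exact (Multiset.card_eq_zero.mp (by simpa using hM.symm)).symm
  | cons a s ih =>
    intro hnd M hM
    have hnd' := Multiset.nodup_cons.1 hnd
    have hMne : M ≠ 0 := by
      intro h
      simp [h] at hM
    obtain ⟨b, hb⟩ := Multiset.exists_mem_of_ne_zero hMne
    obtain ⟨M', rfl⟩ := Multiset.exists_cons_of_mem hb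
    have hcard : Multiset.card s = Multiset.card M' := by
      simpa using hM
    obtain ⟨f', hf'⟩ := ih hnd'.2 M' hcard
    refine ⟨Function.update f' a b, ?_⟩
    rw [Multiset.map_cons, Function.update_self]
    congr 1
    rw [← hf']
    exact Multiset.map_congr rfl fun x hx =>
      Function.update_of_ne (fun h => hnd'.1 (by rwa [h] at hx)) _ _

theorem stmt4 {V : Type*} [Fintype V] [DecidableEq V]
    [DecidableEq (SimpleGraph V)] [Fintype (SimpleGraph V)]
    (τ : ℕ) (E : Fin τ → SimpleGraph V) (k : V → ℕ) :
    (∃ T : Finset (V × Fin τ × Fin τ),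
      (∀ x ∈ T, x.2.1 = x.2.2) ∧
      (∀ v : V, (T.filter (fun x => x.1 = v)).card ≤ k v) ∧
      covers E T) ↔
    (∃ X : SimpleGraph V → Finset V → ℕ,
      (∀ (G : SimpleGraph V) (S : Finset V), X G S ≠ 0 →
        ∀ u v, G.Adj u v → u ∈ S ∨ v ∈ S) ∧
      (∀ G : SimpleGraph V, ∑ S : Finset V, X G S =
        (Finset.univ.filter fun t : Fin τ => E t = G).card) ∧
      (∀ v : V, ∑ G : SimpleGraph V, ∑ S : Finset V,
        (if v ∈ S then X G S else 0) ≤ k v)) := by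
  classical
  constructor
  · rintro ⟨T, hlen, hk, hcov⟩
    -- the cover used at time t
    set g : Fin τ → Finset V := fun t => Finset.univ.filter (fun v => (v, t, t) ∈ T)
      with hgdef
    have hgmem : ∀ (v : V) (t : Fin τ), v ∈ g t ↔ (v, t, t) ∈ T := by
      intro v t; simp [hgdef]
    refine ⟨fun G S => (Finset.univ.filter (fun t : Fin τ => E t = G ∧ g t = S)).card,
      ?_, ?_, ?_⟩
    · -- each used S is a vertex cover
      intro G S hne u v huv
      obtain ⟨t, ht⟩ := Finset.card_ne_zero.1 hne
      obtain ⟨hEt, hgt⟩ := (Finset.mem_filter.1 ht).2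
      have huv' : (E t).Adj u v := hEt ▸ huv
      obtain ⟨x, hxT, hx1, hx2, hx3⟩ := hcov t u v huv'
      have hx4 : x.2.1 = x.2.2 := hlen x hxT
      have ht1 : x.2.1 = t := le_antisymm hx2 (hx4 ▸ hx3)
      have ht2 : x.2.2 = t := by rw [← hx4, ht1]
      have hxx : (x.1, t, t) ∈ T := by
        have h5 : (x.1, x.2.1, x.2.2) ∈ T := hxT
        rwa [ht1, ht2] at h5
      have hmem : x.1 ∈ g t := (hgmem x.1 t).2 hxx
      rw [hgt] at hmem
      rcases hx1 with h | h
      · exact Or.inl (h ▸ hmem)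
      · exact Or.inr (h ▸ hmem)
    · -- sums equal the multiplicities
      intro G
      have := Finset.card_eq_sum_card_fiberwise
        (f := g) (s := Finset.univ.filter (fun t : Fin τ => E t = G))
        (t := Finset.univ) (fun x _ => Finset.mem_univ _)
      rw [this]
      refine Finset.sum_congr rfl fun S _ => ?_
      rw [Finset.filter_filter]
    · -- degree bounds
      intro v
      have step1 : ∀ G : SimpleGraph V,
          ∑ S : Finset V, (if v ∈ S then
            (Finset.univ.filter (fun t : Fin τ => E t = G ∧ g t = S)).card else 0) =
          (Finset.univ.filter (fun t : Fin τ => E t = G ∧ v ∈ g t)).card := by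
        intro G
        have := Finset.card_eq_sum_card_fiberwise
          (f := g) (s := Finset.univ.filter (fun t : Fin τ => E t = G ∧ v ∈ g t))
          (t := Finset.univ) (fun x _ => Finset.mem_univ _)
        rw [this]
        refine (Finset.sum_congr rfl fun S _ => ?_).symm
        rw [Finset.filter_filter]
        split_ifs with hvS
        · congr 1
          ext t
          simp only [Finset.mem_filter, Finset.mem_univ, true_and]
          constructor
          · rintro ⟨⟨h1, _⟩, h3⟩; exact ⟨h1, h3⟩
          · rintro ⟨h1, h3⟩; exact ⟨⟨h1, h3 ▸ hvS⟩, h3⟩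
        · refine Finset.card_eq_zero.2 (Finset.filter_eq_empty_iff.2 ?_)
          rintro t - ⟨⟨-, h2⟩, h3⟩
          exact hvS (h3 ▸ h2)
      have step2 : ∑ G : SimpleGraph V,
          (Finset.univ.filter (fun t : Fin τ => E t = G ∧ v ∈ g t)).card =
          (Finset.univ.filter (fun t : Fin τ => v ∈ g t)).card := by
        have := Finset.card_eq_sum_card_fiberwise
          (f := E) (s := Finset.univ.filter (fun t : Fin τ => v ∈ g t))
          (t := Finset.univ) (fun x _ => Finset.mem_univ _)
        rw [this]
        refine Finset.sum_congr rfl fun G _ => ?_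
        rw [Finset.filter_filter]
        congr 1
        ext t
        simp only [Finset.mem_filter, Finset.mem_univ, true_and, and_comm]
      have step3 : (Finset.univ.filter (fun t : Fin τ => v ∈ g t)).card ≤
          (T.filter (fun x => x.1 = v)).card := by
        apply Finset.card_le_card_of_injOn (fun t => (v, t, t))
        · intro t ht
          rw [Finset.mem_coe, Finset.mem_filter]
          exact ⟨(hgmem v t).1 (Finset.mem_filter.1 (Finset.mem_coe.1 ht)).2, rfl⟩
        · intro a _ b _ h
          exact congrArg (fun x : V × Fin τ × Fin τ => x.2.1) h
      calc ∑ G : SimpleGraph V, ∑ S : Finset V,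
            (if v ∈ S then
              (Finset.univ.filter (fun t : Fin τ => E t = G ∧ g t = S)).card else 0)
          = ∑ G : SimpleGraph V,
            (Finset.univ.filter (fun t : Fin τ => E t = G ∧ v ∈ g t)).card :=
            Finset.sum_congr rfl fun G _ => step1 G
        _ = (Finset.univ.filter (fun t : Fin τ => v ∈ g t)).card := step2
        _ ≤ (T.filter (fun x => x.1 = v)).card := step3
        _ ≤ k v := hk v
  · rintro ⟨X, hX1, hX2, hX3⟩
    -- target multisets of covers
    set M : SimpleGraph V → Multiset (Finset V) :=
      fun G => ∑ S : Finset V, Multiset.replicate (X G S) S with hMdef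
    have hcount : ∀ G S, Multiset.count S (M G) = X G S := by
      intro G S
      rw [hMdef]
      simp only [Multiset.count_sum', Multiset.count_replicate]
      simp [Finset.sum_ite_eq]
    have hcardM : ∀ G, Multiset.card (M G) =
        (Finset.univ.filter fun t : Fin τ => E t = G).card := by
      intro G
      rw [hMdef]
      simp only [card_finsetSum, Multiset.card_replicate]
      exact hX2 G
    have hex : ∀ G : SimpleGraph V, ∃ f : Fin τ → Finset V,
        (Finset.univ.filter (fun t : Fin τ => E t = G)).val.map f = M G := by
      intro G
      exact exists_map_eq _ (Finset.univ.filter (fun t : Fin τ => E t = G)).nodup _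
        (by rw [hcardM G]; rfl)
    choose f hf using hex
    set F : Fin τ → Finset V := fun t => f (E t) t with hFdef
    have hmapF : ∀ G : SimpleGraph V,
        (Finset.univ.filter (fun t : Fin τ => E t = G)).val.map F = M G := by
      intro G
      rw [← hf G]
      refine Multiset.map_congr rfl fun t ht => ?_
      have hEt : E t = G := (Finset.mem_filter.1 (Finset.mem_def.2 ht : t ∈ Finset.univ.filter (fun t : Fin τ => E t = G))).2
      rw [hFdef]
      simp only
      rw [hEt]
    have hFcov : ∀ t : Fin τ, ∀ u v : V, (E t).Adj u v → u ∈ F t ∨ v ∈ F t := by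
      intro t u v huv
      have htmem : t ∈ (Finset.univ.filter (fun s : Fin τ => E s = E t)).val :=
        Finset.mem_def.1 (Finset.mem_filter.2 ⟨Finset.mem_univ t, rfl⟩ : t ∈ Finset.univ.filter (fun s : Fin τ => E s = E t))
      have hFt : F t ∈ M (E t) := by
        rw [← hmapF (E t)]
        exact Multiset.mem_map_of_mem F htmem
      have hXne : X (E t) (F t) ≠ 0 := by
        have := Multiset.count_pos.2 hFt
        rw [hcount] at this
        omega
      exact hX1 (E t) (F t) hXne u v huv
    refine ⟨Finset.univ.filter
      (fun x : V × Fin τ × Fin τ => x.2.1 = x.2.2 ∧ x.1 ∈ F x.2.1), ?_, ?_, ?_⟩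
    · intro x hx
      exact ((Finset.mem_filter.1 hx).2).1
    · -- per-vertex bound
      intro v
      have himg : (Finset.univ.filter
            (fun x : V × Fin τ × Fin τ => x.2.1 = x.2.2 ∧ x.1 ∈ F x.2.1)).filter
            (fun x => x.1 = v) =
          (Finset.univ.filter (fun t : Fin τ => v ∈ F t)).image (fun t => (v, t, t)) := by
        ext x
        obtain ⟨a, b, c⟩ := x
        simp only [Finset.mem_filter, Finset.mem_univ, true_and, Finset.mem_image,
          Prod.mk.injEq]
        constructor
        · rintro ⟨⟨rfl, hm⟩, rfl⟩
          exact ⟨b, hm, rfl, rfl, rfl⟩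
        · rintro ⟨t, hm, rfl, rfl, rfl⟩
          exact ⟨⟨rfl, hm⟩, rfl⟩
      rw [himg, Finset.card_image_of_injective _ (fun a b h => congrArg (fun x : V × Fin τ × Fin τ => x.2.1) h)]
      -- now count times v is used
      have key : ∀ G : SimpleGraph V,
          ((Finset.univ.filter (fun t : Fin τ => v ∈ F t)).filter
            (fun t => E t = G)).card =
          ∑ S : Finset V, (if v ∈ S then X G S else 0) := by
        intro G
        have h1 : (Finset.univ.filter (fun t : Fin τ => v ∈ F t)).filter
            (fun t => E t = G) =
            (Finset.univ.filter (fun t : Fin τ => E t = G)).filter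
            (fun t => v ∈ F t) := by
          rw [Finset.filter_filter, Finset.filter_filter]
          congr 1
          ext t
          exact and_comm
        rw [h1]
        have h2 : ((Finset.univ.filter (fun t : Fin τ => E t = G)).filter
            (fun t => v ∈ F t)).card =
            Multiset.card (Multiset.filter (fun S => v ∈ S)
              ((Finset.univ.filter (fun t : Fin τ => E t = G)).val.map F)) := by
          rw [Multiset.filter_map]
          rw [Multiset.card_map]
          rfl
        rw [h2, hmapF G, hMdef]
        rw [filter_finsetSum]
        rw [card_finsetSum]
        refine Finset.sum_congr rfl fun S _ => ?_
        rw [filter_replicate']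
        split_ifs with h
        · simp
        · simp
      have := Finset.card_eq_sum_card_fiberwise
        (f := E) (s := Finset.univ.filter (fun t : Fin τ => v ∈ F t))
        (t := Finset.univ) (fun x _ => Finset.mem_univ _)
      rw [this]
      calc ∑ G : SimpleGraph V, ((Finset.univ.filter (fun t : Fin τ => v ∈ F t)).filter
            (fun t => E t = G)).card
          = ∑ G : SimpleGraph V, ∑ S : Finset V, (if v ∈ S then X G S else 0) :=
            Finset.sum_congr rfl fun G _ => key G
        _ ≤ k v := hX3 v
    · -- covers
      intro t u v huv
      rcases hFcov t u v huv with h | h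
      · exact ⟨(u, t, t), Finset.mem_filter.2 ⟨Finset.mem_univ _, rfl, h⟩,
          Or.inl rfl, le_refl t, le_refl t⟩
      · exact ⟨(v, t, t), Finset.mem_filter.2 ⟨Finset.mem_univ _, rfl, h⟩,
          Or.inr rfl, le_refl t, le_refl t⟩
end
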